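/- arXiv:2503.11820 — 5 statements merged into one kernel-verified Lean document; each statement's English description precedes it below -/
import Mathlib

section
/- Let α : G' → G be a graph homomorphism between finite DAGs (α maps every directed edge v → w of G' to a directed edge α(v) → α(w) of G, or to a single vertex when α(v) = α(w)). Then α is also a graph homomorphism between the moralisations mor(G') → mor(G): every undirected edge v — w of mor(G') is mapped either to an undirected edge of mor(G) or to a single vertex. -/
/-- Moralisation of a DAG with edge relation `E`: undirected adjacency. -/
def moral {V : Type*} (E : V → V → Prop) (v w : V) : Prop :=
  v ≠ w ∧ (E v w ∨ E w v ∨ ∃ u, E v u ∧ E w u)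

/-- A DAG homomorphism induces a homomorphism between moralisations. -/
theorem stmt_4 {V' V : Type*} [Fintype V'] [Fintype V]
    (E' : V' → V' → Prop) (E : V → V → Prop) (α : V' → V)
    (hhom : ∀ v w, E' v w → α v = α w ∨ E (α v) (α w)) :
    ∀ v w, moral E' v w → α v = α w ∨ moral E (α v) (α w) := by
  intro v w hm
  by_cases heq : α v = α w
  · exact Or.inl heq
  · right
    refine ⟨heq, ?_⟩
    rcases hm.2 with h | h | ⟨u, h1, h2⟩
    · rcases hhom v w h with h' | h'
      · exact absurd h' heq
      · exact Or.inl h'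
    · rcases hhom w v h with h' | h'
      · exact absurd h'.symm heq
      · exact Or.inr (Or.inl h')
    · rcases hhom v u h1 with hv | hv <;> rcases hhom w u h2 with hw | hw
      · exact absurd (hv.trans hw.symm) heq
      · exact Or.inr (Or.inl (hv ▸ hw))
      · exact Or.inl (hw ▸ hv)
      · exact Or.inr (Or.inr ⟨α u, hv, hw⟩)
end

section
/- Let H be a finite undirected graph equipped with a total order ≤ on its vertices, and let tr(H) be its triangulation: there is a directed edge v → w in tr(H) whenever v < w and there exists a path v — w₁ — ⋯ — wₙ = w in H with wᵢ ≥ w for all i. Then tr(H) satisfies: for all vertices u, v, w, if u → w and v → w in tr(H) and u < v, then u → v in tr(H). -/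
/-- Triangulation edge: `v → w` iff `v < w` and there is a path
`v — w₁ — ⋯ — wₙ = w` in the undirected graph `adj` with all `wᵢ ≥ w`. -/
def trEdge {V : Type*} [LinearOrder V] (adj : V → V → Prop) (v w : V) : Prop :=
  v < w ∧ ∃ l : List V, List.Chain adj v (l ++ [w]) ∧ ∀ x ∈ l ++ [w], w ≤ x

/-- The triangulation satisfies: two parents of a common vertex are joined by
an edge in the direction of the order. -/
theorem stmt_5 {V : Type*} [Fintype V] [LinearOrder V]
    (adj : V → V → Prop) (hsymm : Symmetric adj) :
    ∀ u v w : V, trEdge adj u w → trEdge adj v w → u < v → trEdge adj u v := by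
  rintro u v w ⟨huw, l₁, hc₁, hb₁⟩ ⟨hvw, l₂, hc₂, hb₂⟩ huv
  refine ⟨huv, l₁ ++ [w] ++ l₂.reverse, ?_, ?_⟩
  · -- chains as Chain'
    have h1 : List.Chain' adj ((u :: l₁) ++ [w]) := hc₁
    have h2 : List.Chain' adj ((v :: l₂) ++ [w]) := hc₂
    have h2' : List.Chain' adj (((v :: l₂) ++ [w]).reverse) := by
      rw [List.Chain', List.isChain_reverse]
      exact h2.imp fun a b h => hsymm h
    have h2'' : List.Chain' adj ([w] ++ (l₂.reverse ++ [v])) := by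
      simpa using h2'
    have := h1.append_overlap h2'' (by simp)
    exact (by simpa [List.append_assoc] using this :
      List.IsChain adj (u :: (l₁ ++ [w] ++ l₂.reverse ++ [v])))
  · intro x hx
    have hwv : v ≤ w := le_of_lt hvw
    simp only [List.append_assoc, List.mem_append, List.mem_singleton,
      List.mem_reverse] at hx
    rcases hx with h | h | h | h
    · exact hwv.trans (hb₁ x (by simp [h]))
    · exact hwv.trans (hb₁ x (by simp [h]))
    · exact hwv.trans (hb₂ x (by simp [h]))
    · exact le_of_eq h.symm
end

section
/- Let H be a finite ordered undirected graph and tr(H) its triangulation. For each vertex v, let C_v be the set of cliques C of H such that v ∈ C ⊆ parents_{tr(H)}(v) ∪ {v}. Then the sets C_v, for v ranging over the vertices, are pairwise disjoint and their union is the set of all cliques of H. -/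
/-- `C ∈ C_v`: the clique `C` contains `v` and is contained in
`parents_{tr(H)}(v) ∪ {v}`. -/
def inCv {V : Type*} [LinearOrder V] (adj : V → V → Prop) (v : V) (C : Finset V) : Prop :=
  v ∈ C ∧ ∀ u ∈ C, u = v ∨ trEdge adj u v

/-- The sets `C_v` are pairwise disjoint, and every nonempty clique of `H`
belongs to some `C_v`. -/
theorem stmt_8 {V : Type*} [Fintype V] [LinearOrder V] (adj : V → V → Prop) :
    (∀ v w : V, v ≠ w → ∀ C : Finset V,
        (∀ a ∈ C, ∀ b ∈ C, a ≠ b → adj a b) → C.Nonempty →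
          ¬ (inCv adj v C ∧ inCv adj w C)) ∧
    (∀ C : Finset V, (∀ a ∈ C, ∀ b ∈ C, a ≠ b → adj a b) → C.Nonempty →
        ∃ v, inCv adj v C) := by
  constructor
  · rintro v w hvw C _ _ ⟨⟨hvC, hv⟩, ⟨hwC, hw⟩⟩
    rcases hv w hwC with h | ⟨hlt, _⟩
    · exact hvw h.symm
    rcases hw v hvC with h | ⟨hlt', _⟩
    · exact hvw h
    exact absurd hlt' (not_lt.2 hlt.le)
  · intro C hclique hne
    refine ⟨C.max' hne, C.max'_mem hne, fun u hu => ?_⟩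
    by_cases h : u = C.max' hne
    · exact Or.inl h
    · refine Or.inr ⟨lt_of_le_of_ne (C.le_max' u hu) h, [], ?_, ?_⟩
      · exact List.Chain.cons (hclique u hu _ (C.max'_mem hne) h) List.Chain.nil
      · simp only [List.nil_append, List.mem_singleton]
        rintro x rfl; exact le_rfl
end

section
/- Let α : H' → H be an order-preserving graph homomorphism between finite ordered undirected graphs. Then α induces a homomorphism of the triangulations: whenever v → w is a directed edge of tr(H'), either α(v) = α(w) or α(v) → α(w) is a directed edge of tr(H). -/
lemma contract_chain {V : Type*} (adj : V → V → Prop) :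
    ∀ (M : List V) (a b : V),
      List.Chain (fun x y => x = y ∨ adj x y) a (M ++ [b]) → a ≠ b →
      ∃ M', List.Chain adj a (M' ++ [b]) ∧ ∀ x ∈ M', x ∈ M := by
  intro M
  induction M with
  | nil =>
    intro a b h hne
    simp only [List.nil_append, List.chain_cons, List.Chain.nil, and_true] at h
    exact ⟨[], by simpa [List.Chain, List.isChain_pair] using (List.isChain_pair.mp h).resolve_left hne, by simp⟩
  | cons c M ih =>
    intro a b h hne
    simp only [List.cons_append, List.Chain, List.isChain_cons_cons] at h
    obtain ⟨hac, hch⟩ := h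
    rcases hac with rfl | hadj
    · obtain ⟨M', h1, h2⟩ := ih a b hch hne
      exact ⟨M', h1, fun x hx => List.mem_cons_of_mem _ (h2 x hx)⟩
    · by_cases hcb : c = b
      · subst hcb
        exact ⟨[], by simpa [List.Chain, List.isChain_pair] using hadj, by simp⟩
      · obtain ⟨M', h1, h2⟩ := ih c b hch hcb
        refine ⟨c :: M', ?_, ?_⟩
        · simp only [List.cons_append, List.Chain, List.isChain_cons_cons]
          exact ⟨hadj, h1⟩
        · intro x hx
          rcases List.mem_cons.mp hx with rfl | hx
          · exact List.mem_cons_self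
          · exact List.mem_cons_of_mem _ (h2 x hx)

/-- An order-preserving graph homomorphism induces a homomorphism between
triangulations. -/
theorem stmt_9 {V' V : Type*} [Fintype V'] [Fintype V] [LinearOrder V'] [LinearOrder V]
    (adj' : V' → V' → Prop) (adj : V → V → Prop) (α : V' → V)
    (hmono : Monotone α)
    (hhom : ∀ v w, adj' v w → α v = α w ∨ adj (α v) (α w)) :
    ∀ v w, trEdge adj' v w → α v = α w ∨ trEdge adj (α v) (α w) := by
  intro v w ⟨hvw, l, hch, hmem⟩
  by_cases heq : α v = α w
  · exact Or.inl heq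
  · right
    refine ⟨lt_of_le_of_ne (hmono hvw.le) heq, ?_⟩
    have hmap : List.Chain (fun x y => x = y ∨ adj x y) (α v) (List.map α (l ++ [w])) :=
      List.isChain_map_of_isChain (l := v :: (l ++ [w])) α (fun a b hab => hhom a b hab) hch
    rw [List.map_append, List.map_singleton] at hmap
    obtain ⟨M', h1, h2⟩ := contract_chain adj (List.map α l) (α v) (α w) hmap heq
    refine ⟨M', h1, ?_⟩
    intro x hx
    rcases List.mem_append.mp hx with hx | hx
    · obtain ⟨y, hy, rfl⟩ := List.mem_map.mp (h2 x hx)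
      exact hmono (hmem y (List.mem_append_left _ hy))
    · simp only [List.mem_singleton] at hx
      subst hx
      exact le_refl _
end

section
/- Let G be a finite DAG with topological order satisfying: u → w and v → w with u < v implies u → v. Let ω be a probability distribution on a finite product ∏_{v∈V} X_v (all X_v finite nonempty) and suppose ω(x) = (1/Z) ∏_{v∈V} f_v(x_v | x_{parents(v)}) for all x, where each f_v : X_v × ∏_{u∈parents(v)} X_u → ℝ≥0 is an arbitrary nonnegative function and Z > 0 a normalisation constant. Then there exist stochastic matrices g_v (i.e. g_v ≥ 0 and ∑_{y∈X_v} g_v(y | x_{parents(v)}) = 1 for all arguments) such that ω(x) = ∏_{v∈V} g_v(x_v | x_{parents(v)}) for all x. -/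
open Finset Function

section Aux

variable {V : Type*} [Fintype V] [DecidableEq V]
variable {X : V → Type*} [∀ v, Fintype (X v)] [∀ v, Nonempty (X v)]

lemma sum_update_aux (m : V) (h : (∀ v, X v) → ℝ) :
    ∑ x : ∀ v, X v, ∑ y : X m, h (Function.update x m y)
      = (Fintype.card (X m) : ℝ) * ∑ x : ∀ v, X v, h x := by
  have h1 : ∑ x : ∀ v, X v, ∑ y : X m, h (Function.update x m y)
      = ∑ p : (∀ v, X v) × X m, h (Function.update p.1 m p.2) := by
    rw [Fintype.sum_prod_type]
  have h2 : ∑ p : (∀ v, X v) × X m, h (Function.update p.1 m p.2)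
      = ∑ p : (∀ v, X v) × X m, h p.1 :=
    Fintype.sum_equiv
      ⟨fun p => (Function.update p.1 m p.2, p.1 m),
       fun p => (Function.update p.1 m p.2, p.1 m),
       fun p => by simp [Function.update_idem],
       fun p => by simp [Function.update_idem]⟩ _ _ (fun p => rfl)
  rw [h1, h2, Fintype.sum_prod_type]
  simp only [Finset.sum_const, card_univ, nsmul_eq_mul]
  rw [Finset.mul_sum]


variable [LinearOrder V]

lemma sumprod_aux (E : V → V → Prop) (htopo : ∀ u w, E u w → u < w)
    (g : ∀ v : V, (∀ u, X u) → ℝ)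
    (hgdep : ∀ v (x x' : ∀ u, X u), x v = x' v → (∀ u, E u v → x u = x' u) →
      g v x = g v x')
    (hgsum : ∀ v (x : ∀ u, X u), ∑ y : X v, g v (Function.update x v y) = 1)
    (S : Finset V) :
    ∑ x : ∀ v, X v, ∏ v ∈ S, g v x = ∏ v ∈ Sᶜ, (Fintype.card (X v) : ℝ) := by
  induction S using Finset.strongInduction with
  | _ S ih =>
    rcases S.eq_empty_or_nonempty with rfl | hS
    · simp only [Finset.prod_empty, Finset.sum_const, card_univ, nsmul_eq_mul, mul_one,
        Finset.compl_empty]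
      rw [Fintype.card_pi]
      push_cast
      rfl
    · set m := S.max' hS with hm
      have hmS : m ∈ S := S.max'_mem hS
      have hupd : ∀ (x : ∀ v, X v) (y : X m) v, v ∈ S.erase m →
          g v (Function.update x m y) = g v x := by
        intro x y v hv
        have hvS := Finset.mem_of_mem_erase hv
        have hvm : v ≠ m := Finset.ne_of_mem_erase hv
        have hvlt : v < m := lt_of_le_of_ne (S.le_max' v hvS) hvm
        apply hgdep
        · exact Function.update_of_ne hvm y x
        · intro u hu
          exact Function.update_of_ne (ne_of_lt ((htopo u v hu).trans hvlt)) y x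
      have hcard : ((Fintype.card (X m) : ℝ)) ≠ 0 :=
        Nat.cast_ne_zero.mpr Fintype.card_ne_zero
      have step : (Fintype.card (X m) : ℝ) * ∑ x : ∀ v, X v, ∏ v ∈ S, g v x
          = ∑ x : ∀ v, X v, ∏ v ∈ S.erase m, g v x := by
        rw [← sum_update_aux m]
        apply Finset.sum_congr rfl
        intro x _
        have : ∀ y : X m, ∏ v ∈ S, g v (Function.update x m y)
            = g m (Function.update x m y) * ∏ v ∈ S.erase m, g v x := by
          intro y
          rw [← Finset.mul_prod_erase S _ hmS]
          congr 1
          exact Finset.prod_congr rfl (fun v hv => hupd x y v hv)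
        rw [Finset.sum_congr rfl (fun y _ => this y), ← Finset.sum_mul, hgsum m x, one_mul]
      have ih' := ih (S.erase m) (Finset.erase_ssubset hmS)
      have hcompl : (S.erase m)ᶜ = insert m Sᶜ := by
        ext v
        simp only [Finset.mem_compl, Finset.mem_erase, Finset.mem_insert]
        tauto
      rw [hcompl, Finset.prod_insert (by simp [hmS])] at ih'
      rw [← step] at ih'
      exact mul_left_cancel₀ hcard ih'

lemma key_aux (E : V → V → Prop) (htopo : ∀ u w, E u w → u < w)
    (htri : ∀ u v w, E u w → E v w → u < v → E u v)
    (S : Finset V) :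
    (∀ u v, E u v → v ∈ S → u ∈ S) →
    ∀ f : ∀ v : V, (∀ u, X u) → ℝ,
    (∀ v ∈ S, ∀ x, 0 ≤ f v x) →
    (∀ v ∈ S, ∀ (x x' : ∀ u, X u), x v = x' v → (∀ u, E u v → x u = x' u) →
      f v x = f v x') →
    ∃ (g : ∀ v : V, (∀ u, X u) → ℝ) (c : ℝ), 0 ≤ c ∧
      (∀ v x, 0 ≤ g v x) ∧
      (∀ v (x x' : ∀ u, X u), x v = x' v → (∀ u, E u v → x u = x' u) →
        g v x = g v x') ∧
      (∀ v (x : ∀ u, X u), ∑ y : X v, g v (Function.update x v y) = 1) ∧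
      (∀ x, ∏ v ∈ S, f v x = c * ∏ v ∈ S, g v x) := by
  classical
  induction S using Finset.strongInduction with
  | _ S ih =>
    intro hlow f hfnn hfdep
    have huni : ∀ v : V, ∑ y : X v, ((Fintype.card (X v) : ℝ))⁻¹ = 1 := by
      intro v
      rw [Finset.sum_const, card_univ, nsmul_eq_mul]
      exact mul_inv_cancel₀ (Nat.cast_ne_zero.mpr Fintype.card_ne_zero)
    rcases S.eq_empty_or_nonempty with rfl | hS
    · exact ⟨fun v _ => ((Fintype.card (X v) : ℝ))⁻¹, 1, zero_le_one,
        fun v x => by positivity,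
        fun v x x' _ _ => rfl,
        fun v x => huni v,
        fun x => by simp⟩
    set m := S.max' hS with hm
    have hmS : m ∈ S := S.max'_mem hS
    set F : (∀ u, X u) → ℝ := fun x => ∑ y : X m, f m (Function.update x m y) with hF
    have hFnn : ∀ x, 0 ≤ F x := fun x => Finset.sum_nonneg fun y _ => hfnn m hmS _
    have hFdep : ∀ (x x' : ∀ u, X u), (∀ u, E u m → x u = x' u) → F x = F x' := by
      intro x x' hxx'
      apply Finset.sum_congr rfl
      intro y _
      apply hfdep m hmS
      · simp
      · intro u hu
        have hum : u ≠ m := ne_of_lt (htopo u m hu)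
        rw [Function.update_of_ne hum y x, Function.update_of_ne hum y x']
        exact hxx' u hu
    have hfmle : ∀ x, f m x ≤ F x := by
      intro x
      have := Finset.single_le_sum (f := fun y : X m => f m (Function.update x m y))
        (fun y _ => hfnn m hmS _) (Finset.mem_univ (x m))
      simpa [Function.update_eq_self] using this
    set gm : (∀ u, X u) → ℝ :=
      fun x => if F x = 0 then ((Fintype.card (X m) : ℝ))⁻¹ else f m x / F x with hgm
    have hgmnn : ∀ x, 0 ≤ gm x := by
      intro x
      rw [hgm]
      dsimp only
      split
      · positivity
      · exact div_nonneg (hfnn m hmS x) (hFnn x)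
    have hFupd : ∀ (x : ∀ u, X u) (y : X m), F (Function.update x m y) = F x := by
      intro x y
      apply hFdep
      intro u hu
      exact Function.update_of_ne (ne_of_lt (htopo u m hu)) y x
    have hgmdep : ∀ (x x' : ∀ u, X u), x m = x' m → (∀ u, E u m → x u = x' u) →
        gm x = gm x' := by
      intro x x' h1 h2
      rw [hgm]
      dsimp only
      rw [hfdep m hmS x x' h1 h2, hFdep x x' h2]
    have hgmsum : ∀ x : ∀ u, X u, ∑ y : X m, gm (Function.update x m y) = 1 := by
      intro x
      by_cases h0 : F x = 0
      · have he : ∀ y : X m, gm (Function.update x m y) = ((Fintype.card (X m) : ℝ))⁻¹ := by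
          intro y
          rw [hgm]
          dsimp only
          rw [hFupd x y, if_pos h0]
        rw [Finset.sum_congr rfl (fun y _ => he y)]
        exact huni m
      · have he : ∀ y : X m, gm (Function.update x m y)
            = f m (Function.update x m y) / F x := by
          intro y
          rw [hgm]
          dsimp only
          rw [hFupd x y, if_neg h0]
        rw [Finset.sum_congr rfl (fun y _ => he y), ← Finset.sum_div]
        exact div_self h0
    have hfmgm : ∀ x, f m x = gm x * F x := by
      intro x
      by_cases h0 : F x = 0
      · have : f m x = 0 := le_antisymm (h0 ▸ hfmle x) (hfnn m hmS x)
        rw [this, h0, mul_zero]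
      · rw [hgm]
        dsimp only
        rw [if_neg h0, div_mul_cancel₀ _ h0]
    have hlow' : ∀ u v, E u v → v ∈ S.erase m → u ∈ S.erase m := by
      intro u v huv hv
      have hvS := Finset.mem_of_mem_erase hv
      exact Finset.mem_erase.mpr
        ⟨ne_of_lt (lt_of_lt_of_le (htopo u v huv) (S.le_max' v hvS)), hlow u v huv hvS⟩
    by_cases hP : ∃ u, E u m
    · -- m has a parent; absorb F into the maximal parent w
      set P : Finset V := Finset.univ.filter (fun u => E u m) with hPdef
      have hPne : P.Nonempty := by
        obtain ⟨u, hu⟩ := hP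
        exact ⟨u, by simp [hPdef, hu]⟩
      set w := P.max' hPne with hw
      have hwP : w ∈ P := P.max'_mem hPne
      have hwm : E w m := by
        have := hwP
        rw [hPdef] at this
        simpa using this
      have hwltm : w < m := htopo w m hwm
      have hwS : w ∈ S := hlow w m hwm hmS
      have hwerase : w ∈ S.erase m := Finset.mem_erase.mpr ⟨ne_of_lt hwltm, hwS⟩
      have hparw : ∀ u, E u m → u ≠ w → E u w := by
        intro u hu huw
        have huP : u ∈ P := by simp [hPdef, hu]
        have : u ≤ w := P.le_max' u huP
        exact htri u w m hu hwm (lt_of_le_of_ne this huw)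
      set f' : ∀ v : V, (∀ u, X u) → ℝ :=
        Function.update f w (fun x => f w x * F x) with hf'
      have hf'w : ∀ x, f' w x = f w x * F x := by
        intro x
        rw [hf', Function.update_self]
      have hf'ne : ∀ v, v ≠ w → f' v = f v := by
        intro v hv
        rw [hf', Function.update_of_ne hv _ f]
      have hfnn' : ∀ v ∈ S.erase m, ∀ x, 0 ≤ f' v x := by
        intro v hv x
        by_cases hvw : v = w
        · subst hvw
          rw [hf'w]
          exact mul_nonneg (hfnn w hwS x) (hFnn x)
        · rw [hf'ne v hvw]
          exact hfnn v (Finset.mem_of_mem_erase hv) x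
      have hfdep' : ∀ v ∈ S.erase m, ∀ (x x' : ∀ u, X u), x v = x' v →
          (∀ u, E u v → x u = x' u) → f' v x = f' v x' := by
        intro v hv x x' h1 h2
        by_cases hvw : v = w
        · subst hvw
          rw [hf'w, hf'w]
          have hFe : F x = F x' := by
            apply hFdep
            intro u hu
            by_cases huw : u = w
            · subst huw; exact h1
            · exact h2 u (hparw u hu huw)
          rw [hfdep w hwS x x' h1 h2, hFe]
        · rw [hf'ne v hvw]
          exact hfdep v (Finset.mem_of_mem_erase hv) x x' h1 h2
      obtain ⟨g', c', hc', hg'nn, hg'dep, hg'sum, heq'⟩ :=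
        ih (S.erase m) (Finset.erase_ssubset hmS) hlow' f' hfnn' hfdep'
      refine ⟨Function.update g' m gm, c', hc', ?_, ?_, ?_, ?_⟩
      · intro v x
        by_cases hvm : v = m
        · subst hvm; rw [Function.update_self]; exact hgmnn x
        · rw [Function.update_of_ne hvm _ g']; exact hg'nn v x
      · intro v x x' h1 h2
        by_cases hvm : v = m
        · subst hvm; rw [Function.update_self]; exact hgmdep x x' h1 h2
        · rw [Function.update_of_ne hvm _ g']; exact hg'dep v x x' h1 h2
      · intro v x
        by_cases hvm : v = m
        · subst hvm; rw [Function.update_self]; exact hgmsum x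
        · rw [Function.update_of_ne hvm _ g']; exact hg'sum v x
      · intro x
        have hprodf' : ∏ v ∈ S.erase m, f' v x = F x * ∏ v ∈ S.erase m, f v x := by
          rw [← Finset.mul_prod_erase _ _ hwerase, ← Finset.mul_prod_erase _ (fun v => f v x) hwerase,
            hf'w, Finset.prod_congr rfl (fun v hv => by
              rw [hf'ne v (Finset.ne_of_mem_erase hv)])]
          ring
        have hprodg : ∏ v ∈ S, Function.update g' m gm v x
            = gm x * ∏ v ∈ S.erase m, g' v x := by
          rw [← Finset.mul_prod_erase _ _ hmS, Function.update_self]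
          congr 1
          exact Finset.prod_congr rfl (fun v hv => by
            rw [Function.update_of_ne (Finset.ne_of_mem_erase hv) _ g'])
        calc ∏ v ∈ S, f v x = f m x * ∏ v ∈ S.erase m, f v x :=
              (Finset.mul_prod_erase _ _ hmS).symm
          _ = gm x * (F x * ∏ v ∈ S.erase m, f v x) := by rw [hfmgm]; ring
          _ = gm x * ∏ v ∈ S.erase m, f' v x := by rw [hprodf']
          _ = gm x * (c' * ∏ v ∈ S.erase m, g' v x) := by rw [heq' x]
          _ = c' * ∏ v ∈ S, Function.update g' m gm v x := by rw [hprodg]; ring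
    · -- m has no parents: F is constant
      have hFconst : ∀ x x' : ∀ u, X u, F x = F x' := by
        intro x x'
        exact hFdep x x' (fun u hu => absurd ⟨u, hu⟩ hP)
      obtain ⟨x0⟩ : Nonempty (∀ v, X v) := inferInstance
      set c0 : ℝ := F x0 with hc0
      obtain ⟨g', c', hc', hg'nn, hg'dep, hg'sum, heq'⟩ :=
        ih (S.erase m) (Finset.erase_ssubset hmS) hlow' f
          (fun v hv => hfnn v (Finset.mem_of_mem_erase hv))
          (fun v hv => hfdep v (Finset.mem_of_mem_erase hv))
      refine ⟨Function.update g' m gm, c0 * c', mul_nonneg (hFnn x0) hc', ?_, ?_, ?_, ?_⟩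
      · intro v x
        by_cases hvm : v = m
        · subst hvm; rw [Function.update_self]; exact hgmnn x
        · rw [Function.update_of_ne hvm _ g']; exact hg'nn v x
      · intro v x x' h1 h2
        by_cases hvm : v = m
        · subst hvm; rw [Function.update_self]; exact hgmdep x x' h1 h2
        · rw [Function.update_of_ne hvm _ g']; exact hg'dep v x x' h1 h2
      · intro v x
        by_cases hvm : v = m
        · subst hvm; rw [Function.update_self]; exact hgmsum x
        · rw [Function.update_of_ne hvm _ g']; exact hg'sum v x
      · intro x
        have hprodg : ∏ v ∈ S, Function.update g' m gm v x
            = gm x * ∏ v ∈ S.erase m, g' v x := by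
          rw [← Finset.mul_prod_erase _ _ hmS, Function.update_self]
          congr 1
          exact Finset.prod_congr rfl (fun v hv => by
            rw [Function.update_of_ne (Finset.ne_of_mem_erase hv) _ g'])
        calc ∏ v ∈ S, f v x = f m x * ∏ v ∈ S.erase m, f v x :=
              (Finset.mul_prod_erase _ _ hmS).symm
          _ = gm x * F x * ∏ v ∈ S.erase m, f v x := by rw [hfmgm]
          _ = gm x * c0 * (c' * ∏ v ∈ S.erase m, g' v x) := by
              rw [heq' x, hFconst x x0]
          _ = c0 * c' * ∏ v ∈ S, Function.update g' m gm v x := by rw [hprodg]; ring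

end Aux



/-- Normalisation lemma for triangulated DAGs: a distribution factorising
through nonnegative factors (up to a normalisation constant) factorises
through stochastic matrices. -/
theorem stmt_12 {V : Type*} [Fintype V] [DecidableEq V] [LinearOrder V]
    (E : V → V → Prop)
    (htopo : ∀ u w, E u w → u < w)
    (htri : ∀ u v w, E u w → E v w → u < v → E u v)
    (X : V → Type*) [∀ v, Fintype (X v)] [∀ v, Nonempty (X v)]
    (ω : (∀ v, X v) → ℝ)
    (hωnn : ∀ x, 0 ≤ ω x) (hωsum : ∑ x, ω x = 1)
    (f : ∀ v : V, (∀ u, X u) → ℝ)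
    (hfnn : ∀ v x, 0 ≤ f v x)
    (hfdep : ∀ v (x x' : ∀ u, X u), x v = x' v → (∀ u, E u v → x u = x' u) →
      f v x = f v x')
    (Z : ℝ) (hZ : 0 < Z)
    (hfact : ∀ x, ω x = (1 / Z) * ∏ v, f v x) :
    ∃ g : ∀ v : V, (∀ u, X u) → ℝ,
      (∀ v x, 0 ≤ g v x) ∧
      (∀ v (x x' : ∀ u, X u), x v = x' v → (∀ u, E u v → x u = x' u) →
        g v x = g v x') ∧
      (∀ v (x : ∀ u, X u), ∑ y : X v, g v (Function.update x v y) = 1) ∧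
      (∀ x, ω x = ∏ v, g v x) := by
  obtain ⟨g, c, hc, hgnn, hgdep, hgsum, heq⟩ :=
    key_aux E htopo htri Finset.univ (fun u v _ _ => Finset.mem_univ u) f
      (fun v _ x => hfnn v x) (fun v _ => hfdep v)
  have hsum : ∑ x : ∀ v, X v, ∏ v, g v x = 1 := by
    have := sumprod_aux E htopo g hgdep hgsum Finset.univ
    simpa using this
  have hωe : ∀ x, ω x = (c / Z) * ∏ v, g v x := by
    intro x
    rw [hfact x, heq x]
    ring
  have hcZ : c / Z = 1 := by
    have h1 : ∑ x : ∀ v, X v, ω x = (c / Z) * ∑ x : ∀ v, X v, ∏ v, g v x := by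
      rw [Finset.mul_sum]
      exact Finset.sum_congr rfl (fun x _ => hωe x)
    rw [hωsum, hsum, mul_one] at h1
    exact h1.symm
  refine ⟨g, hgnn, hgdep, hgsum, fun x => ?_⟩
  rw [hωe x, hcZ, one_mul]
end
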